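/- Let F₁ ⊆ F₂ ⊆ ℤ be infinite sets, where F₁ = ⨆_i φ_i(F₁) is a disjoint union under affine maps φ_i(x) = a_i·x + b_i with |a_i| > 1, and F₂ = ⨆_j ψ_j(F₂) is a disjoint union under affine maps ψ_j(x) = c_j·x + d_j with |c_j| > 1. If α, β are the unique reals with ∑_i |a_i|^{-α} = 1 and ∑_j |c_j|^{-β} = 1, then α ≤ β. -/

import Mathlib

lemma aux_ncard_iUnion_le {ι : Type*} [Fintype ι] (s : ι → Set ℤ)
    (hfin : ∀ i, (s i).Finite) : (⋃ i, s i).ncard ≤ ∑ i, (s i).ncard := by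
  classical
  have h1 : (⋃ i, s i) = ↑(Finset.univ.biUnion fun i => (hfin i).toFinset) := by
    ext x; simp [Set.Finite.mem_toFinset]
  rw [h1, Set.ncard_coe_finset]
  calc (Finset.univ.biUnion fun i => (hfin i).toFinset).card
      ≤ ∑ i, ((hfin i).toFinset).card := Finset.card_biUnion_le
    _ = ∑ i, (s i).ncard := by
        refine Finset.sum_congr rfl fun i _ => ?_
        rw [Set.ncard_eq_toFinset_card _ (hfin i)]

lemma aux_sum_ncard_le {ι : Type*} [Fintype ι] (s : ι → Set ℤ) (T : Set ℤ)
    (hfin : T.Finite) (hsub : ∀ i, s i ⊆ T)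
    (hdisj : ∀ i j, i ≠ j → Disjoint (s i) (s j)) :
    ∑ i, (s i).ncard ≤ T.ncard := by
  classical
  have hf : ∀ i, (s i).Finite := fun i => hfin.subset (hsub i)
  have h2 : ∑ i, (s i).ncard = (Finset.univ.biUnion fun i => (hf i).toFinset).card := by
    rw [Finset.card_biUnion]
    · refine Finset.sum_congr rfl fun i _ => ?_
      rw [Set.ncard_eq_toFinset_card _ (hf i)]
    · intro x _ y _ hxy
      exact Set.Finite.disjoint_toFinset.2 (hdisj x y hxy)
  rw [h2, Set.ncard_eq_toFinset_card _ hfin]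
  apply Finset.card_le_card
  intro x hx
  simp only [Finset.mem_biUnion, Set.Finite.mem_toFinset] at hx ⊢
  obtain ⟨i, _, hi⟩ := hx
  exact hsub i hi

lemma aux_affine_inj (u v : ℤ) (hu : u ≠ 0) : Function.Injective (fun x : ℤ => u * x + v) := by
  intro x y h
  simp only [add_left_inj] at h
  exact mul_left_cancel₀ hu h

lemma aux_upper_rec (m : ℕ) (c d : Fin m → ℤ) (F : Set ℤ)
    (hc : ∀ j, 1 < |c j|)
    (hunion : F = ⋃ j, (fun x => c j * x + d j) '' F)
    (D : ℤ) (hD : ∀ j, |d j| ≤ D) (r : ℤ) :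
    (F ∩ Set.Icc (-r) r).ncard ≤
      ∑ j, (F ∩ Set.Icc (-((r + D) / |c j|)) ((r + D) / |c j|)).ncard := by
  classical
  have hfin : ∀ s : ℤ, (F ∩ Set.Icc (-s) s).Finite :=
    fun s => Set.Finite.inter_of_right (Set.finite_Icc _ _) F
  have hcpos : ∀ j, (0:ℤ) < |c j| := fun j => lt_trans one_pos (hc j)
  have cover : F ∩ Set.Icc (-r) r ⊆
      ⋃ j, (fun x => c j * x + d j) '' (F ∩ Set.Icc (-((r + D) / |c j|)) ((r + D) / |c j|)) := by
    rintro y ⟨hyF, hy⟩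
    rw [hunion] at hyF
    rw [Set.mem_iUnion] at hyF
    obtain ⟨j, x, hxF, hxy⟩ := hyF
    refine Set.mem_iUnion.2 ⟨j, x, ⟨hxF, ?_⟩, hxy⟩
    rw [Set.mem_Icc, ← abs_le, Int.le_ediv_iff_mul_le (hcpos j)]
    have h2 : c j * x = y - d j := by simp only at hxy; linarith
    calc |x| * |c j| = |c j * x| := by rw [abs_mul, mul_comm]
      _ = |y - d j| := by rw [h2]
      _ ≤ |y| + |d j| := abs_sub _ _
      _ ≤ r + D := add_le_add (abs_le.2 (Set.mem_Icc.1 hy)) (hD j)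
  calc (F ∩ Set.Icc (-r) r).ncard
      ≤ (⋃ j, (fun x => c j * x + d j) ''
          (F ∩ Set.Icc (-((r + D) / |c j|)) ((r + D) / |c j|))).ncard :=
        Set.ncard_le_ncard cover (Set.finite_iUnion fun j => ((hfin _).image _))
    _ ≤ ∑ j, ((fun x => c j * x + d j) ''
          (F ∩ Set.Icc (-((r + D) / |c j|)) ((r + D) / |c j|))).ncard :=
        aux_ncard_iUnion_le _ (fun j => (hfin _).image _)
    _ = _ := by
        refine Finset.sum_congr rfl fun j _ => ?_
        refine Set.ncard_image_of_injective _ (aux_affine_inj _ _ ?_)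
        intro h; have := hcpos j; rw [h] at this; simp at this

lemma aux_lower_rec (n : ℕ) (a b : Fin n → ℤ) (F : Set ℤ)
    (ha : ∀ i, 1 < |a i|)
    (hunion : F = ⋃ i, (fun x => a i * x + b i) '' F)
    (hdisj : ∀ i j, i ≠ j →
      Disjoint ((fun x => a i * x + b i) '' F) ((fun x => a j * x + b j) '' F))
    (B : ℤ) (hB : ∀ i, |b i| ≤ B) (r : ℤ) :
    ∑ i, (F ∩ Set.Icc (-((r - B) / |a i|)) ((r - B) / |a i|)).ncard ≤
      (F ∩ Set.Icc (-r) r).ncard := by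
  classical
  have hfin : ∀ s : ℤ, (F ∩ Set.Icc (-s) s).Finite :=
    fun s => Set.Finite.inter_of_right (Set.finite_Icc _ _) F
  have hapos : ∀ i, (0:ℤ) < |a i| := fun i => lt_trans one_pos (ha i)
  have hne : ∀ i, a i ≠ 0 := by
    intro i h; have := hapos i; rw [h] at this; simp at this
  set U : Fin n → Set ℤ := fun i =>
    (fun x => a i * x + b i) '' (F ∩ Set.Icc (-((r - B) / |a i|)) ((r - B) / |a i|)) with hU
  have hsum : ∀ i, (U i).ncard = (F ∩ Set.Icc (-((r - B) / |a i|)) ((r - B) / |a i|)).ncard :=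
    fun i => Set.ncard_image_of_injective _ (aux_affine_inj _ _ (hne i))
  have hsub : ∀ i, U i ⊆ F ∩ Set.Icc (-r) r := by
    rintro i y ⟨x, ⟨hxF, hx⟩, rfl⟩
    constructor
    · have : (fun x => a i * x + b i) '' F ⊆ F := by
        rw [hunion]; exact Set.subset_iUnion_of_subset i (by rw [← hunion])
      exact this ⟨x, hxF, rfl⟩
    · rw [Set.mem_Icc, ← abs_le]
      have hx' : |x| ≤ (r - B) / |a i| := abs_le.2 (Set.mem_Icc.1 hx)
      have h1 : |a i| * |x| ≤ r - B := by
        calc |a i| * |x| ≤ |a i| * ((r - B) / |a i|) :=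
              mul_le_mul_of_nonneg_left hx' (le_of_lt (hapos i))
          _ = ((r - B) / |a i|) * |a i| := mul_comm _ _
          _ ≤ r - B := Int.ediv_mul_le _ (ne_of_gt (hapos i))
      calc |a i * x + b i| ≤ |a i * x| + |b i| := abs_add_le _ _
        _ = |a i| * |x| + |b i| := by rw [abs_mul]
        _ ≤ (r - B) + B := add_le_add h1 (hB i)
        _ = r := by ring
  have hdisj' : ∀ i j, i ≠ j → Disjoint (U i) (U j) := by
    intro i j hij
    exact (hdisj i j hij).mono (Set.image_mono Set.inter_subset_left)
      (Set.image_mono Set.inter_subset_left)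
  calc ∑ i, (F ∩ Set.Icc (-((r - B) / |a i|)) ((r - B) / |a i|)).ncard
      = ∑ i, (U i).ncard := by exact Finset.sum_congr rfl fun i _ => (hsum i).symm
    _ ≤ (F ∩ Set.Icc (-r) r).ncard := aux_sum_ncard_le _ _ (hfin r) hsub hdisj'

lemma aux_count_le (F : Set ℤ) (r : ℤ) (hr : 0 ≤ r) :
    ((F ∩ Set.Icc (-r) r).ncard : ℝ) ≤ 2 * (r:ℝ) + 1 := by
  have h1 : (F ∩ Set.Icc (-r) r).ncard ≤ (Set.Icc (-r) r).ncard :=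
    Set.ncard_le_ncard Set.inter_subset_right (Set.finite_Icc _ _)
  have h2 : (Set.Icc (-r) r).ncard = (r + 1 - (-r)).toNat := by
    rw [← Finset.coe_Icc, Set.ncard_coe_finset, Int.card_Icc]
  have h3 : ((r + 1 - (-r)).toNat : ℝ) = 2 * (r:ℝ) + 1 := by
    have : ((r + 1 - (-r)).toNat : ℤ) = 2 * r + 1 := by omega
    have := congrArg (fun z : ℤ => (z : ℝ)) this
    push_cast at this ⊢
    linarith
  calc ((F ∩ Set.Icc (-r) r).ncard : ℝ) ≤ ((Set.Icc (-r) r).ncard : ℝ) := by exact_mod_cast h1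
    _ = 2 * (r:ℝ) + 1 := by rw [h2, h3]
lemma aux_upper_bound (m : ℕ) (c d : Fin m → ℤ) (F : Set ℤ)
    (hc : ∀ j, 1 < |c j|)
    (hunion : F = ⋃ j, (fun x => c j * x + d j) '' F)
    (β : ℝ) (hβ0 : 0 ≤ β)
    (hβ : ∑ j : Fin m, (|(c j : ℝ)|) ^ (-β) = 1) :
    ∃ C : ℝ, 0 < C ∧ ∀ r : ℤ, 0 ≤ r →
      ((F ∩ Set.Icc (-r) r).ncard : ℝ) ≤ C * ((r : ℝ) + 1) ^ β := by
  classical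
  set D : ℤ := ∑ j, |d j| with hDdef
  set Cm : ℤ := ∑ j, |c j| with hCmdef
  have hD0 : (0:ℤ) ≤ D := Finset.sum_nonneg fun j _ => abs_nonneg _
  have hCm0 : (0:ℤ) ≤ Cm := Finset.sum_nonneg fun j _ => abs_nonneg _
  have hDj : ∀ j, |d j| ≤ D := by
    intro j; rw [hDdef]
    exact Finset.single_le_sum (f := fun j => |d j|) (fun j _ => abs_nonneg _) (Finset.mem_univ j)
  have hCj : ∀ j, |c j| ≤ Cm := by
    intro j; rw [hCmdef]
    exact Finset.single_le_sum (f := fun j => |c j|) (fun j _ => abs_nonneg _) (Finset.mem_univ j)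
  have hcpos : ∀ j, (0:ℤ) < |c j| := fun j => lt_trans one_pos (hc j)
  have hc2 : ∀ j, (2:ℤ) ≤ |c j| := fun j => hc j
  set C : ℝ := 2 * ((D:ℝ) + (Cm:ℝ)) + 1 with hCdef
  have hCpos : (0:ℝ) < C := by
    have h1 : (0:ℝ) ≤ (D:ℝ) := by exact_mod_cast hD0
    have h2 : (0:ℝ) ≤ (Cm:ℝ) := by exact_mod_cast hCm0
    rw [hCdef]; linarith
  have key : ∀ k : ℕ, ∀ r : ℤ, 0 ≤ r → r ≤ (k:ℤ) →
      ((F ∩ Set.Icc (-r) r).ncard : ℝ) ≤ C * (max 1 ((r:ℝ) - (D:ℝ))) ^ β := by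
    intro k
    induction k using Nat.strong_induction_on with
    | _ k IH =>
      intro r hr0 hrk
      have hmax1 : (1:ℝ) ≤ max 1 ((r:ℝ) - (D:ℝ)) := le_max_left _ _
      have hmaxpos : (0:ℝ) < max 1 ((r:ℝ) - (D:ℝ)) := lt_of_lt_of_le one_pos hmax1
      by_cases hsmall : r < D + Cm
      · have h1 := aux_count_le F r hr0
        have h2 : 2 * (r:ℝ) + 1 ≤ C := by
          rw [hCdef]
          have : (r:ℝ) ≤ (D:ℝ) + (Cm:ℝ) := by exact_mod_cast le_of_lt hsmall
          linarith
        calc ((F ∩ Set.Icc (-r) r).ncard : ℝ) ≤ C := le_trans h1 h2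
          _ = C * 1 := (mul_one C).symm
          _ ≤ C * (max 1 ((r:ℝ) - (D:ℝ))) ^ β :=
              mul_le_mul_of_nonneg_left (Real.one_le_rpow hmax1 hβ0) (le_of_lt hCpos)
      · push_neg at hsmall
        -- r ≥ D + Cm ≥ 2, so max = r - D
        have hrD : (Cm:ℤ) ≤ r - D := by omega
        have hmaxeq : max 1 ((r:ℝ) - (D:ℝ)) = (r:ℝ) - (D:ℝ) := by
          apply max_eq_right
          have h2 : (2:ℤ) ≤ Cm := le_trans (hc2 ⟨0, by
            rcases Nat.eq_zero_or_pos m with hm | hm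
            · exfalso; subst hm; simp at hβ
            · exact hm⟩) (hCj _)
          have : (1:ℤ) ≤ r - D := by omega
          exact_mod_cast this
        have hrec := aux_upper_rec m c d F hc hunion D hDj r
        set M : ℝ := (r:ℝ) - (D:ℝ) with hMdef
        have hM1 : (1:ℝ) ≤ M := by rw [← hmaxeq]; exact hmax1
        have hMpos : (0:ℝ) < M := lt_of_lt_of_le one_pos hM1
        have hterm : ∀ j : Fin m,
            ((F ∩ Set.Icc (-((r + D) / |c j|)) ((r + D) / |c j|)).ncard : ℝ)
              ≤ C * (M / |(c j : ℝ)|) ^ β := by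
          intro j
          set t : ℤ := (r + D) / |c j| with htdef
          have ht0 : (0:ℤ) ≤ t := Int.ediv_nonneg (by omega) (le_of_lt (hcpos j))
          have htmul : t * |c j| ≤ r + D := Int.ediv_mul_le _ (ne_of_gt (hcpos j))
          have htlt : t < r := by
            by_contra hcon
            push_neg at hcon
            have h1 : r * |c j| ≤ t * |c j| :=
              mul_le_mul_of_nonneg_right hcon (abs_nonneg _)
            nlinarith [h1, htmul, hsmall, hCj j, hc2 j,
              mul_le_mul_of_nonneg_left (show (1:ℤ) ≤ |c j| - 1 from by
                have := hc2 j; omega) hr0]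
          have hk1 : 1 ≤ k := by omega
          have htk : t ≤ ((k - 1 : ℕ) : ℤ) := by
            have : ((k - 1 : ℕ) : ℤ) = (k:ℤ) - 1 := by omega
            omega
          have hIH := IH (k - 1) (by omega) t ht0 htk
          have hcR : (0:ℝ) < |(c j : ℝ)| := by
            have := hcpos j; exact_mod_cast this
          have hc2R : (2:ℝ) ≤ |(c j : ℝ)| := by
            have := hc2 j; exact_mod_cast this
          have hbound : max 1 ((t:ℝ) - (D:ℝ)) ≤ M / |(c j : ℝ)| := by
            apply max_le
            · rw [le_div_iff₀ hcR, one_mul, hMdef]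
              have hCjR : |(c j : ℝ)| ≤ (Cm:ℝ) := by
                have := hCj j; exact_mod_cast this
              have : ((Cm:ℤ):ℝ) ≤ (r:ℝ) - (D:ℝ) := by exact_mod_cast hrD
              linarith
            · rw [le_div_iff₀ hcR, hMdef]
              have hmulR : (t:ℝ) * |(c j : ℝ)| ≤ (r:ℝ) + (D:ℝ) := by
                exact_mod_cast htmul
              have hDR : (0:ℝ) ≤ (D:ℝ) := by exact_mod_cast hD0
              nlinarith
          calc ((F ∩ Set.Icc (-t) t).ncard : ℝ)
              ≤ C * (max 1 ((t:ℝ) - (D:ℝ))) ^ β := hIH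
            _ ≤ C * (M / |(c j : ℝ)|) ^ β := by
                apply mul_le_mul_of_nonneg_left _ (le_of_lt hCpos)
                exact Real.rpow_le_rpow (le_trans zero_le_one (le_max_left _ _))
                  hbound hβ0
        have hsumeq : ∑ j : Fin m, C * (M / |(c j : ℝ)|) ^ β = C * M ^ β := by
          have h1 : ∀ j : Fin m, C * (M / |(c j : ℝ)|) ^ β
              = (C * M ^ β) * (|(c j : ℝ)|) ^ (-β) := by
            intro j
            rw [Real.div_rpow (le_of_lt hMpos) (abs_nonneg _),
              Real.rpow_neg (abs_nonneg _), div_eq_mul_inv]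
            ring
          rw [Finset.sum_congr rfl (fun j _ => h1 j), ← Finset.mul_sum, hβ, mul_one]
        calc ((F ∩ Set.Icc (-r) r).ncard : ℝ)
            ≤ (∑ j : Fin m, (F ∩ Set.Icc (-((r + D) / |c j|)) ((r + D) / |c j|)).ncard : ℕ) := by
              exact_mod_cast hrec
          _ = ∑ j : Fin m, ((F ∩ Set.Icc (-((r + D) / |c j|)) ((r + D) / |c j|)).ncard : ℝ) := by
              push_cast; ring
          _ ≤ ∑ j : Fin m, C * (M / |(c j : ℝ)|) ^ β :=
              Finset.sum_le_sum fun j _ => hterm j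
          _ = C * M ^ β := hsumeq
          _ = C * (max 1 ((r:ℝ) - (D:ℝ))) ^ β := by rw [hmaxeq]
  refine ⟨C, hCpos, fun r hr => ?_⟩
  have hkey := key r.toNat r hr (by omega)
  have hDR : (0:ℝ) ≤ (D:ℝ) := by exact_mod_cast hD0
  have hr1 : (0:ℝ) ≤ (r:ℝ) := by exact_mod_cast hr
  calc ((F ∩ Set.Icc (-r) r).ncard : ℝ)
      ≤ C * (max 1 ((r:ℝ) - (D:ℝ))) ^ β := hkey
    _ ≤ C * ((r:ℝ) + 1) ^ β := by
        apply mul_le_mul_of_nonneg_left _ (le_of_lt hCpos)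
        apply Real.rpow_le_rpow (le_trans zero_le_one (le_max_left _ _)) _ hβ0
        apply max_le <;> linarith
lemma aux_lower_bound (n : ℕ) (a b : Fin n → ℤ) (F : Set ℤ)
    (ha : ∀ i, 1 < |a i|)
    (hunion : F = ⋃ i, (fun x => a i * x + b i) '' F)
    (hdisj : ∀ i j, i ≠ j →
      Disjoint ((fun x => a i * x + b i) '' F) ((fun x => a j * x + b j) '' F))
    (hne : F.Nonempty)
    (α : ℝ) (hα0 : 0 ≤ α)
    (hα : ∑ i : Fin n, (|(a i : ℝ)|) ^ (-α) = 1) :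
    ∃ ε : ℝ, 0 < ε ∧ ∃ R : ℤ, 0 ≤ R ∧ ∀ r : ℤ, R ≤ r →
      ε * (r:ℝ) ^ α ≤ ((F ∩ Set.Icc (-r) r).ncard : ℝ) := by
  classical
  obtain ⟨x₀, hx₀⟩ := hne
  set B : ℤ := ∑ i, |b i| with hBdef
  set Am : ℤ := ∑ i, |a i| with hAmdef
  have hB0 : (0:ℤ) ≤ B := Finset.sum_nonneg fun i _ => abs_nonneg _
  have hAm0 : (0:ℤ) ≤ Am := Finset.sum_nonneg fun i _ => abs_nonneg _
  have hBi : ∀ i, |b i| ≤ B := by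
    intro i; rw [hBdef]
    exact Finset.single_le_sum (f := fun i => |b i|) (fun i _ => abs_nonneg _) (Finset.mem_univ i)
  have hAi : ∀ i, |a i| ≤ Am := by
    intro i; rw [hAmdef]
    exact Finset.single_le_sum (f := fun i => |a i|) (fun i _ => abs_nonneg _) (Finset.mem_univ i)
  have hapos : ∀ i, (0:ℤ) < |a i| := fun i => lt_trans one_pos (ha i)
  have ha2 : ∀ i, (2:ℤ) ≤ |a i| := fun i => ha i
  set R₀ : ℤ := |x₀| + B with hR₀def
  set E : ℤ := B + Am with hEdef
  set R₁ : ℤ := B + Am * (R₀ + 1) with hR₁def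
  have hR₀0 : (0:ℤ) ≤ R₀ := by have := abs_nonneg x₀; omega
  have hE0 : (0:ℤ) ≤ E := by omega
  have hR₁0 : (0:ℤ) ≤ R₁ := by nlinarith
  have hR₁E : (0:ℝ) < (R₁:ℝ) + (E:ℝ) + 1 := by
    have h1 : (0:ℝ) ≤ (R₁:ℝ) := by exact_mod_cast hR₁0
    have h2 : (0:ℝ) ≤ (E:ℝ) := by exact_mod_cast hE0
    linarith
  set ε : ℝ := ((R₁:ℝ) + (E:ℝ) + 1) ^ (-α) with hεdef
  have hεpos : 0 < ε := Real.rpow_pos_of_pos hR₁E _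
  have hfin : ∀ s : ℤ, (F ∩ Set.Icc (-s) s).Finite :=
    fun s => Set.Finite.inter_of_right (Set.finite_Icc _ _) F
  have hone : ∀ r : ℤ, R₀ ≤ r → (1:ℝ) ≤ ((F ∩ Set.Icc (-r) r).ncard : ℝ) := by
    intro r hr
    have hx : x₀ ∈ F ∩ Set.Icc (-r) r := by
      refine ⟨hx₀, ?_⟩
      rw [Set.mem_Icc, ← abs_le]; omega
    have := (Set.ncard_pos (hfin r)).2 ⟨x₀, hx⟩
    exact_mod_cast this
  have key : ∀ k : ℕ, ∀ r : ℤ, R₀ ≤ r → r ≤ (k:ℤ) →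
      ε * ((r:ℝ) + (E:ℝ)) ^ α ≤ ((F ∩ Set.Icc (-r) r).ncard : ℝ) := by
    intro k
    induction k using Nat.strong_induction_on with
    | _ k IH =>
      intro r hr0 hrk
      have hrR : (0:ℝ) ≤ (r:ℝ) + (E:ℝ) := by
        have : (0:ℤ) ≤ r + E := by omega
        exact_mod_cast this
      by_cases hsmall : r ≤ R₁
      · -- base case
        have h1 : ε * ((r:ℝ) + (E:ℝ)) ^ α ≤ 1 := by
          have h2 : ((r:ℝ) + (E:ℝ)) ^ α ≤ ((R₁:ℝ) + (E:ℝ) + 1) ^ α := by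
            apply Real.rpow_le_rpow hrR _ hα0
            have : (r:ℤ) + E ≤ R₁ + E + 1 := by omega
            exact_mod_cast this
          have h3 : ε * (((R₁:ℝ) + (E:ℝ) + 1) ^ α) = 1 := by
            rw [hεdef, ← Real.rpow_add hR₁E]
            simp
          calc ε * ((r:ℝ) + (E:ℝ)) ^ α ≤ ε * ((R₁:ℝ) + (E:ℝ) + 1) ^ α :=
                mul_le_mul_of_nonneg_left h2 (le_of_lt hεpos)
            _ = 1 := h3
        exact le_trans h1 (hone r hr0)
      · push_neg at hsmall
        have hrec := aux_lower_rec n a b F ha hunion hdisj B hBi r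
        have hr1 : (1:ℤ) ≤ r := by nlinarith
        have hterm : ∀ i : Fin n,
            ε * (((r:ℝ) + (E:ℝ)) / |(a i : ℝ)|) ^ α
              ≤ ((F ∩ Set.Icc (-((r - B) / |a i|)) ((r - B) / |a i|)).ncard : ℝ) := by
          intro i
          set s : ℤ := (r - B) / |a i| with hsdef
          have hsmul : s * |a i| ≤ r - B := Int.ediv_mul_le _ (ne_of_gt (hapos i))
          have hsub : r - B < (s + 1) * |a i| := Int.lt_ediv_add_one_mul_self _ (hapos i)
          have hsR₀ : R₀ ≤ s := by
            rw [hsdef, Int.le_ediv_iff_mul_le (hapos i)]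
            nlinarith [hAi i, mul_le_mul_of_nonneg_left (hAi i) hR₀0]
          have hslt : s < r := by
            by_contra hcon
            push_neg at hcon
            have h1 : r * |a i| ≤ s * |a i| :=
              mul_le_mul_of_nonneg_right hcon (abs_nonneg _)
            nlinarith [ha2 i, mul_le_mul_of_nonneg_left (show (1:ℤ) ≤ |a i| - 1 from by
              have := ha2 i; omega) (by omega : (0:ℤ) ≤ r)]
          have hsk : s ≤ ((k - 1 : ℕ) : ℤ) := by
            have hk1 : 1 ≤ k := by omega
            have : ((k - 1 : ℕ) : ℤ) = (k:ℤ) - 1 := by omega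
            omega
          have hIH := IH (k - 1) (by omega : k - 1 < k) s hsR₀ hsk
          have haR : (0:ℝ) < |(a i : ℝ)| := by have := hapos i; exact_mod_cast this
          have ha2R : (2:ℝ) ≤ |(a i : ℝ)| := by have := ha2 i; exact_mod_cast this
          have hbound : ((r:ℝ) + (E:ℝ)) / |(a i : ℝ)| ≤ (s:ℝ) + (E:ℝ) := by
            rw [div_le_iff₀ haR]
            have hsubR : (r:ℝ) - (B:ℝ) < ((s:ℝ) + 1) * |(a i : ℝ)| := by
              exact_mod_cast hsub
            have hBR : (0:ℝ) ≤ (B:ℝ) := by exact_mod_cast hB0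
            have hAiR : |(a i : ℝ)| ≤ (Am:ℝ) := by have := hAi i; exact_mod_cast this
            have hER : (E:ℝ) = (B:ℝ) + (Am:ℝ) := by rw [hEdef]; push_cast; ring
            nlinarith
          calc ε * (((r:ℝ) + (E:ℝ)) / |(a i : ℝ)|) ^ α
              ≤ ε * ((s:ℝ) + (E:ℝ)) ^ α := by
                apply mul_le_mul_of_nonneg_left _ (le_of_lt hεpos)
                exact Real.rpow_le_rpow (div_nonneg hrR (le_of_lt haR)) hbound hα0
            _ ≤ _ := hIH
        have hsumeq : ∑ i : Fin n, ε * (((r:ℝ) + (E:ℝ)) / |(a i : ℝ)|) ^ α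
            = ε * ((r:ℝ) + (E:ℝ)) ^ α := by
          have h1 : ∀ i : Fin n, ε * (((r:ℝ) + (E:ℝ)) / |(a i : ℝ)|) ^ α
              = (ε * ((r:ℝ) + (E:ℝ)) ^ α) * (|(a i : ℝ)|) ^ (-α) := by
            intro i
            have haR : (0:ℝ) < |(a i : ℝ)| := by have := hapos i; exact_mod_cast this
            rw [Real.div_rpow hrR (abs_nonneg _), Real.rpow_neg (abs_nonneg _),
              div_eq_mul_inv]
            ring
          rw [Finset.sum_congr rfl (fun i _ => h1 i), ← Finset.mul_sum, hα, mul_one]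
        calc ε * ((r:ℝ) + (E:ℝ)) ^ α
            = ∑ i : Fin n, ε * (((r:ℝ) + (E:ℝ)) / |(a i : ℝ)|) ^ α := hsumeq.symm
          _ ≤ ∑ i : Fin n, ((F ∩ Set.Icc (-((r - B) / |a i|)) ((r - B) / |a i|)).ncard : ℝ) :=
              Finset.sum_le_sum fun i _ => hterm i
          _ = ((∑ i : Fin n, (F ∩ Set.Icc (-((r - B) / |a i|)) ((r - B) / |a i|)).ncard : ℕ) : ℝ) := by
              push_cast; ring
          _ ≤ ((F ∩ Set.Icc (-r) r).ncard : ℝ) := by exact_mod_cast hrec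
  refine ⟨ε, hεpos, R₀, hR₀0, fun r hr => ?_⟩
  have hkey := key r.toNat r hr (by omega)
  have hrR : (0:ℝ) ≤ (r:ℝ) := by
    have : (0:ℤ) ≤ r := le_trans hR₀0 hr
    exact_mod_cast this
  have hER : (0:ℝ) ≤ (E:ℝ) := by exact_mod_cast hE0
  calc ε * (r:ℝ) ^ α ≤ ε * ((r:ℝ) + (E:ℝ)) ^ α := by
        apply mul_le_mul_of_nonneg_left _ (le_of_lt hεpos)
        exact Real.rpow_le_rpow hrR (by linarith) hα0
    _ ≤ _ := hkey
/-- Monotonicity of fractal dimension under inclusion: if `F₁ ⊆ F₂` are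
fractals in `ℤ` with dimensions `α`, `β` respectively, then `α ≤ β`. -/
theorem fractal_dimension_monotone
    (n m : ℕ) (a b : Fin n → ℤ) (c d : Fin m → ℤ) (F₁ F₂ : Set ℤ)
    (hF₁_inf : F₁.Infinite) (hF₂_inf : F₂.Infinite)
    (hsub : F₁ ⊆ F₂)
    (ha : ∀ i, 1 < |a i|) (hc : ∀ j, 1 < |c j|)
    (hunion₁ : F₁ = ⋃ i, (fun x => a i * x + b i) '' F₁)
    (hdisj₁ : ∀ i j, i ≠ j →
      Disjoint ((fun x => a i * x + b i) '' F₁) ((fun x => a j * x + b j) '' F₁))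
    (hunion₂ : F₂ = ⋃ j, (fun x => c j * x + d j) '' F₂)
    (hdisj₂ : ∀ i j, i ≠ j →
      Disjoint ((fun x => c i * x + d i) '' F₂) ((fun x => c j * x + d j) '' F₂))
    (α β : ℝ)
    (hα : ∑ i : Fin n, (|(a i : ℝ)|) ^ (-α) = 1)
    (hβ : ∑ j : Fin m, (|(c j : ℝ)|) ^ (-β) = 1) :
    α ≤ β := by
  -- nonnegativity of exponents
  have habs : ∀ (p : ℕ) (u : Fin p → ℤ), (∀ i, 1 < |u i|) →
      ∀ γ : ℝ, (∑ i : Fin p, (|(u i : ℝ)|) ^ (-γ) = 1) → 0 ≤ γ := by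
    intro p u hu γ hγ
    by_contra hneg
    push_neg at hneg
    have hp : 0 < p := by
      rcases Nat.eq_zero_or_pos p with h | h
      · exfalso; subst h; simp at hγ
      · exact h
    set i₀ : Fin p := ⟨0, hp⟩
    have h1 : (1:ℝ) < |(u i₀ : ℝ)| ^ (-γ) := by
      apply (Real.one_lt_rpow_iff (abs_nonneg _)).2
      left
      constructor
      · have := hu i₀
        have : (1:ℤ) < |u i₀| := this
        calc (1:ℝ) < ((|u i₀| : ℤ) : ℝ) := by exact_mod_cast this
          _ = |(u i₀ : ℝ)| := by push_cast; ring
      · linarith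
    have h2 : |(u i₀ : ℝ)| ^ (-γ) ≤ ∑ i : Fin p, (|(u i : ℝ)|) ^ (-γ) :=
      Finset.single_le_sum (f := fun i => (|(u i : ℝ)|) ^ (-γ))
        (fun i _ => Real.rpow_nonneg (abs_nonneg _) _) (Finset.mem_univ i₀)
    rw [hγ] at h2
    linarith
  have hα0 : 0 ≤ α := habs n a ha α hα
  have hβ0 : 0 ≤ β := habs m c hc β hβ
  by_contra hlt
  push_neg at hlt
  obtain ⟨C, hCpos, hupper⟩ := aux_upper_bound m c d F₂ hc hunion₂ β hβ0 hβ
  obtain ⟨ε, hεpos, R, hR0, hlower⟩ :=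
    aux_lower_bound n a b F₁ ha hunion₁ hdisj₁ hF₁_inf.nonempty α hα0 hα
  have hfin₂ : ∀ s : ℤ, (F₂ ∩ Set.Icc (-s) s).Finite :=
    fun s => Set.Finite.inter_of_right (Set.finite_Icc _ _) F₂
  have hfg : ∀ r : ℤ, ((F₁ ∩ Set.Icc (-r) r).ncard : ℝ) ≤ ((F₂ ∩ Set.Icc (-r) r).ncard : ℝ) := by
    intro r
    have := Set.ncard_le_ncard (Set.inter_subset_inter hsub (subset_refl _)) (hfin₂ r)
    exact_mod_cast this
  have hmain : ∀ r : ℤ, max R 1 ≤ r →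
      ε * (r:ℝ) ^ (α - β) ≤ C * 2 ^ β := by
    intro r hr
    have hr1 : (1:ℤ) ≤ r := le_trans (le_max_right _ _) hr
    have hrR : R ≤ r := le_trans (le_max_left _ _) hr
    have hr1R : (1:ℝ) ≤ (r:ℝ) := by exact_mod_cast hr1
    have hrpos : (0:ℝ) < (r:ℝ) := lt_of_lt_of_le one_pos hr1R
    have h1 : ε * (r:ℝ) ^ α ≤ C * ((r:ℝ) + 1) ^ β := by
      calc ε * (r:ℝ) ^ α ≤ ((F₁ ∩ Set.Icc (-r) r).ncard : ℝ) := hlower r hrR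
        _ ≤ ((F₂ ∩ Set.Icc (-r) r).ncard : ℝ) := hfg r
        _ ≤ C * ((r:ℝ) + 1) ^ β := hupper r (by omega)
    have h2 : C * ((r:ℝ) + 1) ^ β ≤ C * 2 ^ β * (r:ℝ) ^ β := by
      have h3 : ((r:ℝ) + 1) ^ β ≤ (2 * (r:ℝ)) ^ β :=
        Real.rpow_le_rpow (by linarith) (by linarith) hβ0
      have h4 : ((2:ℝ) * (r:ℝ)) ^ β = 2 ^ β * (r:ℝ) ^ β :=
        Real.mul_rpow (by norm_num) (le_of_lt hrpos)
      calc C * ((r:ℝ) + 1) ^ β ≤ C * (2 * (r:ℝ)) ^ β :=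
            mul_le_mul_of_nonneg_left h3 (le_of_lt hCpos)
        _ = C * 2 ^ β * (r:ℝ) ^ β := by rw [h4]; ring
    have h5 : ε * (r:ℝ) ^ (α - β) * (r:ℝ) ^ β ≤ C * 2 ^ β * (r:ℝ) ^ β := by
      have h6 : (r:ℝ) ^ (α - β) * (r:ℝ) ^ β = (r:ℝ) ^ α := by
        rw [← Real.rpow_add hrpos]; ring_nf
      calc ε * (r:ℝ) ^ (α - β) * (r:ℝ) ^ β = ε * (r:ℝ) ^ α := by rw [mul_assoc, h6]
        _ ≤ C * ((r:ℝ) + 1) ^ β := h1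
        _ ≤ C * 2 ^ β * (r:ℝ) ^ β := h2
    exact le_of_mul_le_mul_right h5 (Real.rpow_pos_of_pos hrpos β)
  -- pick r large enough to contradict hmain
  have hsub0 : 0 < α - β := by linarith
  have hev := (tendsto_rpow_atTop hsub0).eventually_gt_atTop (C * 2 ^ β / ε)
  obtain ⟨X, hX⟩ := Filter.eventually_atTop.1 hev
  set r : ℤ := max (max R 1) ⌈X⌉ with hrdef
  have hrX : X ≤ (r:ℝ) := by
    calc X ≤ (⌈X⌉ : ℝ) := Int.le_ceil X
      _ ≤ (r:ℝ) := by exact_mod_cast le_max_right (max R 1) ⌈X⌉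
  have h7 := hX (r:ℝ) hrX
  have h8 := hmain r (le_max_left _ _)
  rw [div_lt_iff₀ hεpos] at h7
  linarith
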